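/- Let $R$ be a Noetherian local domain dominated by a rank 1 valuation ring $V$ of its quotient field $K$, with valuation $\nu$ and value group $\Gamma$. Let $p = p(\hat R)_\infty$ be the prime ideal of elements of infinite value in $\hat R$, and let $\overline K$ be the quotient field of $\hat R / p$. Then the function $\overline\nu$ on $\hat R/p \setminus \{0\}$ defined by $\overline\nu(f + p) = \lim_n \nu(f_n)$ (the eventually constant value of $\nu$ on a Cauchy sequence $\{f_n\} \subset R$ converging to $f$) is a well-defined valuation on $\overline K$ extending $\nu$, which dominates $\hat R/p$, and its value group equals $\Gamma$ and its residue field equals $V/m_V$; i.e., $(\overline V, \overline K)$ is an immediate extension of $(V, K)$. -/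

import Mathlib

set_option synthInstance.maxHeartbeats 1000000
set_option maxHeartbeats 1000000

section

variable {R : Type*} [CommRing R] [IsDomain R] [IsNoetherianRing R] [IsLocalRing R]

/-- `c` is a Cauchy sequence in `R` for the `m_R`-adic topology. -/
def IsAdicCauchy (c : ℕ → R) : Prop :=
  ∀ i : ℕ, ∃ N, ∀ m n, N ≤ m → N ≤ n → c m - c n ∈ (IsLocalRing.maximalIdeal R) ^ i

/-- The Cauchy sequence `c` in `R` converges to `f` in the `m_R`-adic completion `R̂`. -/
def ConvergesTo (c : ℕ → R)
    (f : AdicCompletion (IsLocalRing.maximalIdeal R) R) : Prop :=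
  ∀ i : ℕ, ∃ N, ∀ n, N ≤ n →
    AdicCompletion.eval (IsLocalRing.maximalIdeal R) R i f = Submodule.Quotient.mk (c n)

/-- The sequence `c` has values increasing beyond every element of the value group. -/
def HasInfiniteValue (ν : FractionRing R → ℝ) (c : ℕ → R) : Prop :=
  ∀ ρ : ℝ, ∃ N, ∀ n, N ≤ n → c n = 0 ∨ ρ < ν (algebraMap R (FractionRing R) (c n))

-- ### Auxiliary valuation lemmas on a general field

theorem aux_nu_one {K : Type*} [Field K] (ν : K → ℝ)
    (hmul : ∀ x y : K, x ≠ 0 → y ≠ 0 → ν (x * y) = ν x + ν y) : ν 1 = 0 := by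
  have h := hmul 1 1 one_ne_zero one_ne_zero
  rw [mul_one] at h
  linarith

theorem aux_nu_neg {K : Type*} [Field K] (ν : K → ℝ)
    (hmul : ∀ x y : K, x ≠ 0 → y ≠ 0 → ν (x * y) = ν x + ν y) {x : K} (hx : x ≠ 0) :
    ν (-x) = ν x := by
  have h1 : ν (-1 : K) = 0 := by
    have h := hmul (-1) (-1) (by norm_num) (by norm_num)
    rw [neg_mul_neg, one_mul, aux_nu_one ν hmul] at h
    linarith
  have h := hmul (-1) x (by norm_num) hx
  rw [neg_one_mul] at h
  rw [h, h1, zero_add]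

theorem aux_haddl {K : Type*} [Field K] (ν : K → ℝ)
    (hmul : ∀ x y : K, x ≠ 0 → y ≠ 0 → ν (x * y) = ν x + ν y)
    (hadd : ∀ x y : K, x ≠ 0 → y ≠ 0 → x + y ≠ 0 → min (ν x) (ν y) ≤ ν (x + y))
    {x y : K} (hx : x ≠ 0) (hy : y = 0 ∨ (y ≠ 0 ∧ ν x < ν y)) :
    x + y ≠ 0 ∧ ν (x + y) = ν x := by
  rcases hy with rfl | ⟨hy0, hlt⟩
  · simpa using hx
  have hs : x + y ≠ 0 := by
    intro h
    have hyx : y = -x := by linear_combination h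
    rw [hyx, aux_nu_neg ν hmul hx] at hlt
    exact lt_irrefl _ hlt
  refine ⟨hs, ?_⟩
  have h1 : min (ν x) (ν y) ≤ ν (x + y) := hadd x y hx hy0 hs
  rw [min_eq_left hlt.le] at h1
  have h3 : min (ν (x + y)) (ν (-y)) ≤ ν ((x + y) + (-y)) :=
    hadd _ _ hs (neg_ne_zero.mpr hy0) (by simpa [add_neg_cancel_right] using hx)
  rw [add_neg_cancel_right, aux_nu_neg ν hmul hy0] at h3
  have h4 : ν (x + y) ≤ ν x := by
    by_contra hcon
    push_neg at hcon
    exact absurd h3 (not_le.mpr (lt_min hcon hlt))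
  linarith

-- ### The completion is "local": elements with unit first component are units

theorem aux_unit (f : AdicCompletion (IsLocalRing.maximalIdeal R) R)
    (h1 : f.val 1 ≠ 0) : IsUnit f := by
  have hunit : ∀ n, IsUnit (f.val n) := by
    intro n
    rcases Nat.eq_zero_or_pos n with rfl | hn
    · have hss : Subsingleton (R ⧸ ((IsLocalRing.maximalIdeal R) ^ 0 • ⊤ : Submodule R R)) := by
        rw [Submodule.Quotient.subsingleton_iff]
        simp
      exact (Subsingleton.elim (1 : R ⧸ ((IsLocalRing.maximalIdeal R) ^ 0 • ⊤ : Submodule R R)) (f.val 0)) ▸ isUnit_one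
    · obtain ⟨y, hy⟩ := Submodule.Quotient.mk_surjective _ (f.val n)
      have htr := f.property hn
      rw [← hy] at htr
      change (Submodule.Quotient.mk y : R ⧸ ((IsLocalRing.maximalIdeal R) ^ 1 • ⊤ : Submodule R R)) = f.val 1 at htr
      have hy1 : y ∉ ((IsLocalRing.maximalIdeal R) ^ 1 • ⊤ : Submodule R R) := by
        intro hmem
        exact h1 (htr ▸ (Submodule.Quotient.mk_eq_zero _).mpr hmem)
      have hyI : y ∉ IsLocalRing.maximalIdeal R := by
        intro hmem
        exact hy1 (by simpa using hmem)
      have hyu : IsUnit y := by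
        by_contra hc
        exact hyI (((IsLocalRing.mem_maximalIdeal y).mpr (mem_nonunits_iff.mpr hc)))
      rw [← hy]
      exact hyu.map (Ideal.Quotient.mk ((IsLocalRing.maximalIdeal R) ^ n • ⊤ : Ideal R))
  choose g hg using fun n => (hunit n).exists_right_inv
  have hcompat : ∀ {m n : ℕ} (hmn : m ≤ n),
      AdicCompletion.transitionMap (IsLocalRing.maximalIdeal R) R hmn (g n) = g m := by
    intro m n hmn
    have h2 : f.val m * AdicCompletion.transitionMap (IsLocalRing.maximalIdeal R) R hmn (g n) = 1 := by
      rw [← f.property hmn, ← AdicCompletion.transitionMap_map_mul, hg n,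
        AdicCompletion.transitionMap_map_one]
    calc AdicCompletion.transitionMap (IsLocalRing.maximalIdeal R) R hmn (g n)
        = (f.val m * g m) * AdicCompletion.transitionMap (IsLocalRing.maximalIdeal R) R hmn (g n) := by rw [hg m, one_mul]
      _ = (f.val m * AdicCompletion.transitionMap (IsLocalRing.maximalIdeal R) R hmn (g n)) * g m := by ring
      _ = g m := by rw [h2, one_mul]
  exact IsUnit.of_mul_eq_one (a := f) ⟨g, hcompat⟩ (by ext n; exact hg n)

set_option maxHeartbeats 10000000 in
/-- Let `R` be a Noetherian local domain dominated by a rank 1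
valuation ring `V` of its quotient field `K`, with additive real-valued valuation
`ν`, let `P = p(R̂)_∞` be the prime of elements of infinite value in the completion
`R̂`, and let `K̄` be the quotient field of `R̂/P`.  Then the function
`ν̄ (f + P) = lim ν (fₙ)` (eventually constant value along a Cauchy sequence
converging to `f`) is a well-defined valuation on `K̄` extending `ν`, dominating
`R̂/P`, with the same value group and the same residue field as `ν`; i.e.
`(V̄, K̄)` is an immediate extension of `(V, K)`. -/
theorem unique_extension_to_completion_mod_p_infinity_is_immediate
    (ν : FractionRing R → ℝ)
    (hmul : ∀ x y : FractionRing R, x ≠ 0 → y ≠ 0 → ν (x * y) = ν x + ν y)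
    (hadd : ∀ x y : FractionRing R, x ≠ 0 → y ≠ 0 → x + y ≠ 0 →
      min (ν x) (ν y) ≤ ν (x + y))
    (hR : ∀ x : R, x ≠ 0 → 0 ≤ ν (algebraMap R (FractionRing R) x))
    (hm : ∀ x : R, x ∈ IsLocalRing.maximalIdeal R → x ≠ 0 →
      0 < ν (algebraMap R (FractionRing R) x))
    (P : Ideal (AdicCompletion (IsLocalRing.maximalIdeal R) R))
    (hPmem : ∀ f, f ∈ P ↔ ∃ c : ℕ → R, IsAdicCauchy c ∧ ConvergesTo c f ∧
      HasInfiniteValue ν c)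
    (hP : P.IsPrime) :
    -- the target field `K̄ = Q(R̂/P)` and the natural map `ι : R → K̄`
    letI A := AdicCompletion (IsLocalRing.maximalIdeal R) R
    letI Kbar := FractionRing (A ⧸ P)
    letI ι : R → Kbar := fun x =>
      algebraMap (A ⧸ P) Kbar (Ideal.Quotient.mk P (algebraMap R A x))
    ∃ w : Kbar → ℝ,
      -- `w = ν̄` is a valuation on `K̄`
      (∀ x y : Kbar, x ≠ 0 → y ≠ 0 → w (x * y) = w x + w y) ∧
      (∀ x y : Kbar, x ≠ 0 → y ≠ 0 → x + y ≠ 0 → min (w x) (w y) ≤ w (x + y)) ∧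
      -- `w` is given by the limit formula, hence well defined independently of the
      -- choice of Cauchy sequence
      (∀ (f : A) (c : ℕ → R), IsAdicCauchy c → ConvergesTo c f →
        ∀ ρ : ℝ, (∃ N, ∀ n, N ≤ n → c n ≠ 0 ∧
            ν (algebraMap R (FractionRing R) (c n)) = ρ) →
          w (algebraMap (A ⧸ P) Kbar (Ideal.Quotient.mk P f)) = ρ) ∧
      -- `w` extends `ν`
      (∀ x : R, x ≠ 0 → w (ι x) = ν (algebraMap R (FractionRing R) x)) ∧
      -- `w` dominates `R̂/P`
      (∀ g : A ⧸ P, g ≠ 0 → 0 ≤ w (algebraMap (A ⧸ P) Kbar g)) ∧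
      (∀ g : A ⧸ P, g ≠ 0 → ¬ IsUnit g → 0 < w (algebraMap (A ⧸ P) Kbar g)) ∧
      -- same value group: `Γ_{V̄} = Γ_V` as subgroups of `ℝ`
      ({r : ℝ | ∃ ξ : Kbar, ξ ≠ 0 ∧ w ξ = r} =
        {r : ℝ | ∃ x : FractionRing R, x ≠ 0 ∧ ν x = r}) ∧
      -- same residue field: every residue of `V̄` is the residue of an element of `V`
      (∀ ξ : Kbar, ξ ≠ 0 → w ξ = 0 →
        ∃ a b : R, b ≠ 0 ∧
          (a = 0 ∨ ν (algebraMap R (FractionRing R) b) ≤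
            ν (algebraMap R (FractionRing R) a)) ∧
          (ξ * ι b = ι a ∨ w (ξ * ι b - ι a) > w (ι b))) := by
  classical
  haveI := hP
  -- Notation
  have hone : ν 1 = 0 := aux_nu_one ν hmul
  have hφinj : Function.Injective (algebraMap R (FractionRing R)) :=
    IsFractionRing.injective R (FractionRing R)
  have hφne : ∀ x : R, x ≠ 0 → algebraMap R (FractionRing R) x ≠ 0 := by
    intro x hx h
    exact hx (hφinj (by rw [h, map_zero]))
  -- #### the positive lower bound δ for values on the maximal ideal
  obtain ⟨s, hs⟩ : (IsLocalRing.maximalIdeal R).FG := IsNoetherian.noetherian _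
  have hgen : ∀ x ∈ s, x ∈ IsLocalRing.maximalIdeal R := by
    intro x hx
    rw [← hs]
    exact Submodule.subset_span hx
  set T : Finset ℝ :=
    insert (1 : ℝ) ((s.filter (fun x => x ≠ 0)).image
      (fun x => ν (algebraMap R (FractionRing R) x))) with hT
  have hTne : T.Nonempty := Finset.insert_nonempty _ _
  set δ : ℝ := T.min' hTne with hδdef
  have hδpos : 0 < δ := by
    rw [hδdef, Finset.lt_min'_iff]
    intro b hb
    rcases Finset.mem_insert.mp hb with rfl | hb
    · norm_num
    · obtain ⟨x, hxmem, rfl⟩ := Finset.mem_image.mp hb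
      obtain ⟨hxs, hx0⟩ := Finset.mem_filter.mp hxmem
      exact hm x (hgen x hxs) hx0
  have hδle : ∀ x ∈ s, x ≠ 0 → δ ≤ ν (algebraMap R (FractionRing R) x) := by
    intro x hx hx0
    exact Finset.min'_le _ _
      (Finset.mem_insert_of_mem (Finset.mem_image_of_mem _ (Finset.mem_filter.mpr ⟨hx, hx0⟩)))
  -- #### superadditivity helpers in `R`
  have hbig : ∀ (ρ : ℝ) (y z : R), (y = 0 ∨ ρ ≤ ν (algebraMap R (FractionRing R) y)) →
      (z = 0 ∨ ρ ≤ ν (algebraMap R (FractionRing R) z)) →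
      (y + z = 0 ∨ ρ ≤ ν (algebraMap R (FractionRing R) (y + z))) := by
    intro ρ y z hy hz
    by_cases hy0 : y = 0
    · subst hy0; rw [zero_add]; exact hz
    by_cases hz0 : z = 0
    · subst hz0; rw [add_zero]; exact hy
    replace hy := hy.resolve_left hy0
    replace hz := hz.resolve_left hz0
    by_cases hsz : y + z = 0
    · exact Or.inl hsz
    right
    have h := hadd _ _ (hφne y hy0) (hφne z hz0)
      (by rw [← map_add]; exact hφne _ hsz)
    rw [← map_add] at h
    exact le_trans (le_min hy hz) h
  have hbigs : ∀ (ρ : ℝ) (y z : R), (y = 0 ∨ ρ < ν (algebraMap R (FractionRing R) y)) →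
      (z = 0 ∨ ρ < ν (algebraMap R (FractionRing R) z)) →
      (y + z = 0 ∨ ρ < ν (algebraMap R (FractionRing R) (y + z))) := by
    intro ρ y z hy hz
    by_cases hy0 : y = 0
    · subst hy0; rw [zero_add]; exact hz
    by_cases hz0 : z = 0
    · subst hz0; rw [add_zero]; exact hy
    replace hy := hy.resolve_left hy0
    replace hz := hz.resolve_left hz0
    by_cases hsz : y + z = 0
    · exact Or.inl hsz
    right
    have h := hadd _ _ (hφne y hy0) (hφne z hz0)
      (by rw [← map_add]; exact hφne _ hsz)
    rw [← map_add] at h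
    exact lt_of_lt_of_le (lt_min hy hz) h
  -- #### values on powers of the maximal ideal
  have hmem1 : ∀ x ∈ IsLocalRing.maximalIdeal R,
      x = 0 ∨ δ ≤ ν (algebraMap R (FractionRing R) x) := by
    intro x hx
    rw [← hs] at hx
    refine Submodule.span_induction ?_ ?_ ?_ ?_ hx
    · intro y hy
      by_cases hy0 : y = 0
      · exact Or.inl hy0
      · exact Or.inr (hδle y hy hy0)
    · exact Or.inl rfl
    · intro y z _ _ hy hz
      exact hbig δ y z hy hz
    · intro r y _ hy
      by_cases hr : r = 0
      · subst hr; left; rw [zero_smul]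
      rcases hy with rfl | hy
      · left; rw [smul_zero]
      by_cases hy0 : y = 0
      · left; rw [hy0, smul_zero]
      right
      rw [smul_eq_mul, map_mul, hmul _ _ (hφne r hr) (hφne y hy0)]
      have := hR r hr
      linarith
  have hpow : ∀ (i : ℕ) (x : R), x ∈ (IsLocalRing.maximalIdeal R) ^ i →
      x = 0 ∨ (i : ℝ) * δ ≤ ν (algebraMap R (FractionRing R) x) := by
    intro i
    induction i with
    | zero =>
      intro x _
      by_cases hx : x = 0
      · exact Or.inl hx
      · exact Or.inr (by simpa using hR x hx)
    | succ i ih =>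
      intro x hx
      rw [pow_succ] at hx
      refine Submodule.mul_induction_on hx ?_ ?_
      · intro a ha b hb
        by_cases ha0 : a = 0
        · left; rw [ha0, zero_mul]
        by_cases hb0 : b = 0
        · left; rw [hb0, mul_zero]
        right
        have hva := (ih a ha).resolve_left ha0
        have hvb := (hmem1 b hb).resolve_left hb0
        rw [map_mul, hmul _ _ (hφne a ha0) (hφne b hb0)]
        push_cast
        nlinarith [hδpos]
      · intro y z hy hz
        exact hbig _ y z hy hz
  -- #### quotient bookkeeping
  have hsmultop : ∀ i : ℕ,
      ((IsLocalRing.maximalIdeal R) ^ i • ⊤ : Ideal R) = (IsLocalRing.maximalIdeal R) ^ i := by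
    intro i; ext x; simp
  have hqeq : ∀ (i : ℕ) (x y : R),
      (Submodule.Quotient.mk x :
          R ⧸ ((IsLocalRing.maximalIdeal R) ^ i • ⊤ : Submodule R R)) =
        Submodule.Quotient.mk y ↔ x - y ∈ (IsLocalRing.maximalIdeal R) ^ i := by
    intro i x y
    rw [Submodule.Quotient.eq]
    constructor
    · intro h; rwa [hsmultop i] at h
    · intro h; rwa [hsmultop i]
  -- difference of two sequences converging to the same limit
  have hconv_sub : ∀ (c c' : ℕ → R) (f : AdicCompletion (IsLocalRing.maximalIdeal R) R),
      ConvergesTo c f → ConvergesTo c' f → ∀ i : ℕ, ∃ N, ∀ n, N ≤ n →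
        c n - c' n ∈ (IsLocalRing.maximalIdeal R) ^ i := by
    intro c c' f h1 h2 i
    obtain ⟨N1, hN1⟩ := h1 i
    obtain ⟨N2, hN2⟩ := h2 i
    refine ⟨max N1 N2, fun n hn => ?_⟩
    exact (hqeq i _ _).mp
      (((hN1 n (le_trans (le_max_left _ _) hn)).symm.trans
        (hN2 n (le_trans (le_max_right _ _) hn))))
  -- #### the master comparison lemma
  have hmaster : ∀ (f f' : AdicCompletion (IsLocalRing.maximalIdeal R) R)
      (c c' : ℕ → R) (ρ : ℝ), IsAdicCauchy c → IsAdicCauchy c' →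
      ConvergesTo c f → ConvergesTo c' f' → f - f' ∈ P →
      (∃ N, ∀ n, N ≤ n → c n ≠ 0 ∧ ν (algebraMap R (FractionRing R) (c n)) = ρ) →
      (∃ N, ∀ n, N ≤ n → c' n = 0 ∨ ρ < ν (algebraMap R (FractionRing R) (c' n))) →
      False := by
    rintro f f' c c' ρ hc hc' hcf hcf' hPd ⟨N1, hN1⟩ ⟨N2, hN2⟩
    obtain ⟨e, he, hef, hei⟩ := (hPmem _).mp hPd
    have hconv'' : ConvergesTo (fun n => c' n + e n) f := by
      intro i
      obtain ⟨M1, hM1⟩ := hcf' i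
      obtain ⟨M2, hM2⟩ := hef i
      refine ⟨max M1 M2, fun n hn => ?_⟩
      have e1 := hM1 n (le_trans (le_max_left _ _) hn)
      have e2 := hM2 n (le_trans (le_max_right _ _) hn)
      have hfe : AdicCompletion.eval (IsLocalRing.maximalIdeal R) R i f =
          AdicCompletion.eval (IsLocalRing.maximalIdeal R) R i f' +
          AdicCompletion.eval (IsLocalRing.maximalIdeal R) R i (f - f') := by
        rw [← map_add]; congr 1; ring
      rw [hfe, e1, e2, ← Submodule.Quotient.mk_add]
    obtain ⟨i, hi⟩ := exists_nat_gt (ρ / δ)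
    have hiδ : ρ < (i : ℝ) * δ := by rwa [div_lt_iff₀ hδpos] at hi
    obtain ⟨N3, hN3⟩ := hconv_sub c (fun n => c' n + e n) f hcf hconv'' i
    obtain ⟨N4, hN4⟩ := hei ρ
    set n := max (max N1 N2) (max N3 N4) with hn
    have hn1 : N1 ≤ n := le_trans (le_max_left _ _) (le_max_left _ _)
    have hn2 : N2 ≤ n := le_trans (le_max_right _ _) (le_max_left _ _)
    have hn3 : N3 ≤ n := le_trans (le_max_left _ _) (le_max_right _ _)
    have hn4 : N4 ≤ n := le_trans (le_max_right _ _) (le_max_right _ _)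
    obtain ⟨hcn0, hcnv⟩ := hN1 n hn1
    have hd := hN3 n hn3
    have hdisj : (c n - (c' n + e n) = 0) ∨
        ρ < ν (algebraMap R (FractionRing R) (c n - (c' n + e n))) := by
      rcases hpow i _ hd with h0 | hv
      · exact Or.inl h0
      · by_cases h0 : c n - (c' n + e n) = 0
        · exact Or.inl h0
        · exact Or.inr (lt_of_lt_of_le hiδ hv)
    have h1 := hbigs ρ (c' n) (e n) (hN2 n hn2) (hN4 n hn4)
    have h2 := hbigs ρ (c' n + e n) (c n - (c' n + e n)) h1 hdisj
    rw [add_sub_cancel] at h2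
    rcases h2 with h2 | h2
    · exact hcn0 h2
    · rw [hcnv] at h2; exact lt_irrefl _ h2
  -- #### every element of the completion has a Cauchy representative
  have hcauchy_exists : ∀ f : AdicCompletion (IsLocalRing.maximalIdeal R) R,
      ∃ c : ℕ → R, IsAdicCauchy c ∧ ConvergesTo c f := by
    intro f
    obtain ⟨cc, hcc⟩ := AdicCompletion.mk_surjective (IsLocalRing.maximalIdeal R) R f
    refine ⟨fun n => cc n, ?_, ?_⟩
    · intro i
      refine ⟨i, fun m n him hin => ?_⟩
      have h1 := AdicCompletion.AdicCauchySequence.mk_eq_mk him cc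
      have h2 := AdicCompletion.AdicCauchySequence.mk_eq_mk hin cc
      exact (hqeq i _ _).mp (h1.trans h2.symm)
    · intro i
      refine ⟨i, fun n hin => ?_⟩
      rw [← hcc]
      exact (AdicCompletion.AdicCauchySequence.mk_eq_mk hin cc).symm
  -- #### the value function on `A ⧸ P`
  set Good : (AdicCompletion (IsLocalRing.maximalIdeal R) R ⧸ P) → ℝ → Prop :=
    fun g ρ => ∃ (f : AdicCompletion (IsLocalRing.maximalIdeal R) R) (c : ℕ → R),
      Ideal.Quotient.mk P f = g ∧ IsAdicCauchy c ∧ ConvergesTo c f ∧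
      (∃ N, ∀ n, N ≤ n → c n ≠ 0 ∧ ν (algebraMap R (FractionRing R) (c n)) = ρ)
    with hGood
  have hGuniq : ∀ g ρ ρ', Good g ρ → Good g ρ' → ρ = ρ' := by
    rintro g ρ ρ' ⟨f, c, hf, hc, hcf, N1, hN1⟩ ⟨f', c', hf', hc', hcf', N2, hN2⟩
    by_contra hne
    have hPd : f - f' ∈ P := Ideal.Quotient.eq.mp (hf.trans hf'.symm)
    rcases lt_or_gt_of_ne hne with h | h
    · exact hmaster f f' c c' ρ hc hc' hcf hcf' hPd ⟨N1, hN1⟩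
        ⟨N2, fun n hn => Or.inr (by rw [(hN2 n hn).2]; exact h)⟩
    · exact hmaster f' f c' c ρ' hc' hc hcf' hcf
        (Ideal.Quotient.eq.mp (hf'.trans hf.symm)) ⟨N2, hN2⟩
        ⟨N1, fun n hn => Or.inr (by rw [(hN1 n hn).2]; exact h)⟩
  have hGex : ∀ g : AdicCompletion (IsLocalRing.maximalIdeal R) R ⧸ P,
      g ≠ 0 → ∃ ρ, Good g ρ := by
    intro g hg
    obtain ⟨f, rfl⟩ := Ideal.Quotient.mk_surjective g
    obtain ⟨c, hc, hcf⟩ := hcauchy_exists f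
    by_cases hinf : HasInfiniteValue ν c
    · exact absurd (Ideal.Quotient.eq_zero_iff_mem.mpr
        ((hPmem f).mpr ⟨c, hc, hcf, hinf⟩)) hg
    unfold HasInfiniteValue at hinf
    push_neg at hinf
    obtain ⟨ρ₀, hρ₀⟩ := hinf
    obtain ⟨i, hi⟩ := exists_nat_gt (ρ₀ / δ)
    have hiδ : ρ₀ < (i : ℝ) * δ := by rwa [div_lt_iff₀ hδpos] at hi
    obtain ⟨N, hN⟩ := hc i
    obtain ⟨n₀, hn₀N, hn₀, hval⟩ := hρ₀ N
    refine ⟨ν (algebraMap R (FractionRing R) (c n₀)), f, c, rfl, hc, hcf, N, fun n hn => ?_⟩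
    have hd := hN n n₀ hn hn₀N
    rcases eq_or_ne (c n - c n₀) 0 with hd0 | hdne
    · rw [sub_eq_zero] at hd0; rw [hd0]; exact ⟨hn₀, rfl⟩
    have hdv := (hpow i _ hd).resolve_left hdne
    have hsum := aux_haddl ν hmul hadd (hφne _ hn₀)
      (Or.inr ⟨hφne _ hdne, lt_of_le_of_lt hval (lt_of_lt_of_le hiδ hdv)⟩)
    rw [← map_add, add_sub_cancel] at hsum
    exact ⟨fun h0 => hsum.1 (by rw [h0, map_zero]), hsum.2⟩
  set W : (AdicCompletion (IsLocalRing.maximalIdeal R) R ⧸ P) → ℝ :=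
    fun g => if h : ∃ ρ, Good g ρ then h.choose else 0 with hWdef
  have hW : ∀ g ρ, Good g ρ → W g = ρ := by
    intro g ρ h
    have hex : ∃ ρ, Good g ρ := ⟨ρ, h⟩
    rw [hWdef]
    simp only [dif_pos hex]
    exact hGuniq g _ _ hex.choose_spec h
  have hWspec : ∀ g : AdicCompletion (IsLocalRing.maximalIdeal R) R ⧸ P,
      g ≠ 0 → Good g (W g) := by
    intro g hg
    obtain ⟨ρ, h⟩ := hGex g hg
    rw [hW g ρ h]
    exact h
  -- nonvanishing of classes with eventually-constant value
  have hnotP : ∀ (f : AdicCompletion (IsLocalRing.maximalIdeal R) R) (c : ℕ → R) (ρ : ℝ),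
      IsAdicCauchy c → ConvergesTo c f →
      (∃ N, ∀ n, N ≤ n → c n ≠ 0 ∧ ν (algebraMap R (FractionRing R) (c n)) = ρ) →
      Ideal.Quotient.mk P f ≠ 0 := by
    intro f c ρ hc hcf hEV h0
    have hfP : f ∈ P := Ideal.Quotient.eq_zero_iff_mem.mp h0
    refine hmaster f 0 c (fun _ => 0) ρ hc ?_ hcf ?_ (by simpa using hfP) hEV
      ⟨0, fun n _ => Or.inl rfl⟩
    · intro i; exact ⟨0, fun m n _ _ => by simpa using zero_mem _⟩
    · intro i
      refine ⟨0, fun n _ => ?_⟩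
      rw [map_zero]
      exact (Submodule.Quotient.mk_eq_zero _).mpr (zero_mem _) |>.symm
  -- lower bounds for `W`
  have hlow : ∀ (f : AdicCompletion (IsLocalRing.maximalIdeal R) R) (c : ℕ → R) (ρ : ℝ),
      IsAdicCauchy c → ConvergesTo c f →
      (∃ N, ∀ n, N ≤ n → c n = 0 ∨ ρ ≤ ν (algebraMap R (FractionRing R) (c n))) →
      Ideal.Quotient.mk P f ≠ 0 → ρ ≤ W (Ideal.Quotient.mk P f) := by
    rintro f c ρ hc hcf ⟨N, hN⟩ hg
    by_contra hcon
    push_neg at hcon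
    obtain ⟨F, C, hF, hC, hCF, hEVC⟩ := hWspec _ hg
    refine hmaster F f C c (W (Ideal.Quotient.mk P f)) hC hc hCF hcf
      (Ideal.Quotient.eq.mp hF) hEVC
      ⟨N, fun n hn => (hN n hn).imp id (fun h => lt_of_lt_of_le hcon h)⟩
  -- #### W is multiplicative
  have hWmul : ∀ g h : AdicCompletion (IsLocalRing.maximalIdeal R) R ⧸ P,
      g ≠ 0 → h ≠ 0 → W (g * h) = W g + W h := by
    intro g h hg hh
    obtain ⟨f, c, hf, hc, hcf, N1, hN1⟩ := hWspec g hg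
    obtain ⟨f', c', hf', hc', hcf', N2, hN2⟩ := hWspec h hh
    apply hW
    refine ⟨f * f', fun n => c n * c' n, by rw [map_mul, hf, hf'], ?_, ?_, ?_⟩
    · intro i
      obtain ⟨M1, hM1⟩ := hc i
      obtain ⟨M2, hM2⟩ := hc' i
      refine ⟨max M1 M2, fun m n hm hn => ?_⟩
      have hid : c m * c' m - c n * c' n = c m * (c' m - c' n) + (c m - c n) * c' n := by ring
      rw [hid]
      exact add_mem
        (Ideal.mul_mem_left _ _ (hM2 m n (le_trans (le_max_right _ _) hm)
          (le_trans (le_max_right _ _) hn)))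
        (Ideal.mul_mem_right _ _ (hM1 m n (le_trans (le_max_left _ _) hm)
          (le_trans (le_max_left _ _) hn)))
    · intro i
      obtain ⟨M1, hM1⟩ := hcf i
      obtain ⟨M2, hM2⟩ := hcf' i
      refine ⟨max M1 M2, fun n hn => ?_⟩
      have h1 := hM1 n (le_trans (le_max_left _ _) hn)
      have h2 := hM2 n (le_trans (le_max_right _ _) hn)
      have hev : AdicCompletion.eval (IsLocalRing.maximalIdeal R) R i (f * f') =
          AdicCompletion.eval (IsLocalRing.maximalIdeal R) R i f *
          AdicCompletion.eval (IsLocalRing.maximalIdeal R) R i f' := rfl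
      rw [hev, h1, h2]
      rfl
    · refine ⟨max N1 N2, fun n hn => ?_⟩
      obtain ⟨ha, hva⟩ := hN1 n (le_trans (le_max_left _ _) hn)
      obtain ⟨hb, hvb⟩ := hN2 n (le_trans (le_max_right _ _) hn)
      refine ⟨mul_ne_zero ha hb, ?_⟩
      rw [map_mul, hmul _ _ (hφne _ ha) (hφne _ hb), hva, hvb]
  -- #### W is superadditive
  have hWadd : ∀ g h : AdicCompletion (IsLocalRing.maximalIdeal R) R ⧸ P,
      g ≠ 0 → h ≠ 0 → g + h ≠ 0 → min (W g) (W h) ≤ W (g + h) := by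
    intro g h hg hh hgh
    obtain ⟨f, c, hf, hc, hcf, N1, hN1⟩ := hWspec g hg
    obtain ⟨f', c', hf', hc', hcf', N2, hN2⟩ := hWspec h hh
    have hsc : IsAdicCauchy (fun n => c n + c' n) := by
      intro i
      obtain ⟨M1, hM1⟩ := hc i
      obtain ⟨M2, hM2⟩ := hc' i
      refine ⟨max M1 M2, fun m n hm hn => ?_⟩
      have hid : c m + c' m - (c n + c' n) = (c m - c n) + (c' m - c' n) := by ring
      rw [hid]
      exact add_mem (hM1 m n (le_trans (le_max_left _ _) hm) (le_trans (le_max_left _ _) hn))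
        (hM2 m n (le_trans (le_max_right _ _) hm) (le_trans (le_max_right _ _) hn))
    have hsconv : ConvergesTo (fun n => c n + c' n) (f + f') := by
      intro i
      obtain ⟨M1, hM1⟩ := hcf i
      obtain ⟨M2, hM2⟩ := hcf' i
      refine ⟨max M1 M2, fun n hn => ?_⟩
      rw [map_add, hM1 n (le_trans (le_max_left _ _) hn),
        hM2 n (le_trans (le_max_right _ _) hn), ← Submodule.Quotient.mk_add]
    have hne : Ideal.Quotient.mk P (f + f') ≠ 0 := by
      rw [map_add, hf, hf']; exact hgh
    have hb : ∃ N, ∀ n, N ≤ n → (c n + c' n = 0) ∨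
        min (W g) (W h) ≤ ν (algebraMap R (FractionRing R) (c n + c' n)) := by
      refine ⟨max N1 N2, fun n hn => ?_⟩
      refine hbig _ _ _ ?_ ?_
      · exact Or.inr (by rw [(hN1 n (le_trans (le_max_left _ _) hn)).2]; exact min_le_left _ _)
      · exact Or.inr (by rw [(hN2 n (le_trans (le_max_right _ _) hn)).2]; exact min_le_right _ _)
    have := hlow (f + f') _ _ hsc hsconv hb hne
    rwa [map_add, hf, hf'] at this
  -- #### values of elements of `R`
  have hWι : ∀ x : R, x ≠ 0 →
      Ideal.Quotient.mk P (algebraMap R (AdicCompletion (IsLocalRing.maximalIdeal R) R) x) ≠ 0 ∧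
      W (Ideal.Quotient.mk P (algebraMap R (AdicCompletion (IsLocalRing.maximalIdeal R) R) x)) =
        ν (algebraMap R (FractionRing R) x) := by
    intro x hx
    have hcc : IsAdicCauchy (fun _ : ℕ => x) := by
      intro i; exact ⟨0, fun m n _ _ => by simpa using zero_mem _⟩
    have hcv : ConvergesTo (fun _ : ℕ => x)
        (algebraMap R (AdicCompletion (IsLocalRing.maximalIdeal R) R) x) := by
      intro i; exact ⟨0, fun n _ => rfl⟩
    have hEV : ∃ N, ∀ n, N ≤ n → (fun _ : ℕ => x) n ≠ 0 ∧
        ν (algebraMap R (FractionRing R) ((fun _ : ℕ => x) n)) =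
          ν (algebraMap R (FractionRing R) x) :=
      ⟨0, fun n _ => ⟨hx, rfl⟩⟩
    exact ⟨hnotP _ _ _ hcc hcv hEV, hW _ _ ⟨_, _, rfl, hcc, hcv, hEV⟩⟩
  have hW1 : W (1 : AdicCompletion (IsLocalRing.maximalIdeal R) R ⧸ P) = 0 := by
    have h := (hWι 1 one_ne_zero).2
    rw [map_one, map_one, map_one, hone] at h
    exact h
  -- #### passage to the fraction field
  have hα : ∀ g : AdicCompletion (IsLocalRing.maximalIdeal R) R ⧸ P, g ≠ 0 →
      algebraMap (AdicCompletion (IsLocalRing.maximalIdeal R) R ⧸ P)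
        (FractionRing (AdicCompletion (IsLocalRing.maximalIdeal R) R ⧸ P)) g ≠ 0 := by
    intro g hg h
    exact hg (IsFractionRing.injective (AdicCompletion (IsLocalRing.maximalIdeal R) R ⧸ P)
      (FractionRing (AdicCompletion (IsLocalRing.maximalIdeal R) R ⧸ P))
      (by rw [h, map_zero]))
  have hwex : ∀ ξ : FractionRing (AdicCompletion (IsLocalRing.maximalIdeal R) R ⧸ P),
      ξ ≠ 0 → ∃ g h' : AdicCompletion (IsLocalRing.maximalIdeal R) R ⧸ P,
        g ≠ 0 ∧ h' ≠ 0 ∧ ξ * algebraMap _ _ h' = algebraMap _ _ g := by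
    intro ξ hξ
    obtain ⟨⟨g, h'⟩, hgh⟩ := IsLocalization.surj
      (nonZeroDivisors (AdicCompletion (IsLocalRing.maximalIdeal R) R ⧸ P)) ξ
    have hh : (h' : AdicCompletion (IsLocalRing.maximalIdeal R) R ⧸ P) ≠ 0 :=
      nonZeroDivisors.ne_zero h'.2
    refine ⟨g, h', ?_, hh, hgh⟩
    intro h0
    rw [h0, map_zero] at hgh
    rcases mul_eq_zero.mp hgh with h | h
    · exact hξ h
    · exact hα _ hh h
  set w : FractionRing (AdicCompletion (IsLocalRing.maximalIdeal R) R ⧸ P) → ℝ :=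
    fun ξ => if h : ∃ r : ℝ, ∃ g h' : AdicCompletion (IsLocalRing.maximalIdeal R) R ⧸ P,
      g ≠ 0 ∧ h' ≠ 0 ∧ ξ * algebraMap _ _ h' = algebraMap _ _ g ∧ r = W g - W h'
      then h.choose else 0 with hwdef
  have hwval : ∀ (ξ : FractionRing (AdicCompletion (IsLocalRing.maximalIdeal R) R ⧸ P))
      (g h' : AdicCompletion (IsLocalRing.maximalIdeal R) R ⧸ P), g ≠ 0 → h' ≠ 0 →
      ξ * algebraMap _ _ h' = algebraMap _ _ g → w ξ = W g - W h' := by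
    intro ξ g h' hg hh hξ
    have hex : ∃ r : ℝ, ∃ g h' : AdicCompletion (IsLocalRing.maximalIdeal R) R ⧸ P,
        g ≠ 0 ∧ h' ≠ 0 ∧ ξ * algebraMap _ _ h' = algebraMap _ _ g ∧ r = W g - W h' :=
      ⟨W g - W h', g, h', hg, hh, hξ, rfl⟩
    rw [hwdef]
    simp only [dif_pos hex]
    obtain ⟨g₀, h₀, hg₀, hh₀, hξ₀, hr₀⟩ := hex.choose_spec
    rw [hr₀]
    have hcross : g * h₀ = g₀ * h' := by
      apply IsFractionRing.injective (AdicCompletion (IsLocalRing.maximalIdeal R) R ⧸ P)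
        (FractionRing (AdicCompletion (IsLocalRing.maximalIdeal R) R ⧸ P))
      rw [map_mul, map_mul, ← hξ, ← hξ₀]
      ring
    have e1 : W (g * h₀) = W g + W h₀ := hWmul g h₀ hg hh₀
    have e2 : W (g₀ * h') = W g₀ + W h' := hWmul g₀ h' hg₀ hh
    rw [hcross, e2] at e1
    linarith
  have hwalg : ∀ g : AdicCompletion (IsLocalRing.maximalIdeal R) R ⧸ P, g ≠ 0 →
      w (algebraMap _ (FractionRing (AdicCompletion (IsLocalRing.maximalIdeal R) R ⧸ P)) g)
        = W g := by
    intro g hg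
    have h := hwval (algebraMap _ _ g) g 1 hg one_ne_zero (by rw [map_one, mul_one])
    rw [h, hW1, sub_zero]
  -- w is multiplicative
  have hwmul : ∀ x y : FractionRing (AdicCompletion (IsLocalRing.maximalIdeal R) R ⧸ P),
      x ≠ 0 → y ≠ 0 → w (x * y) = w x + w y := by
    intro x y hx hy
    obtain ⟨g1, h1, hg1, hh1, he1⟩ := hwex x hx
    obtain ⟨g2, h2, hg2, hh2, he2⟩ := hwex y hy
    have hprod : (x * y) * algebraMap _ _ (h1 * h2) = algebraMap _ _ (g1 * g2) := by
      rw [map_mul, map_mul]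
      calc x * y * (algebraMap _ _ h1 * algebraMap _ _ h2)
          = (x * algebraMap _ _ h1) * (y * algebraMap _ _ h2) := by ring
        _ = _ := by rw [he1, he2]
    rw [hwval (x * y) (g1 * g2) (h1 * h2) (mul_ne_zero hg1 hg2) (mul_ne_zero hh1 hh2) hprod,
      hwval x g1 h1 hg1 hh1 he1, hwval y g2 h2 hg2 hh2 he2,
      hWmul g1 g2 hg1 hg2, hWmul h1 h2 hh1 hh2]
    ring
  -- w satisfies the ultrametric inequality
  have hwadd : ∀ x y : FractionRing (AdicCompletion (IsLocalRing.maximalIdeal R) R ⧸ P),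
      x ≠ 0 → y ≠ 0 → x + y ≠ 0 → min (w x) (w y) ≤ w (x + y) := by
    intro x y hx hy hxy
    obtain ⟨g1, h1, hg1, hh1, he1⟩ := hwex x hx
    obtain ⟨g2, h2, hg2, hh2, he2⟩ := hwex y hy
    have hes : (x + y) * algebraMap _ _ (h1 * h2)
        = algebraMap _ _ (g1 * h2 + g2 * h1) := by
      rw [map_add, map_mul, map_mul, map_mul, ← he1, ← he2]
      ring
    have hs : g1 * h2 + g2 * h1 ≠ 0 := by
      intro h0
      rw [h0, map_zero] at hes
      rcases mul_eq_zero.mp hes with h | h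
      · exact hxy h
      · exact hα _ (mul_ne_zero hh1 hh2) h
    rw [hwval (x + y) _ _ hs (mul_ne_zero hh1 hh2) hes,
      hwval x g1 h1 hg1 hh1 he1, hwval y g2 h2 hg2 hh2 he2]
    have hmin := hWadd (g1 * h2) (g2 * h1) (mul_ne_zero hg1 hh2) (mul_ne_zero hg2 hh1) hs
    rw [hWmul g1 h2 hg1 hh2, hWmul g2 h1 hg2 hh1] at hmin
    rw [hWmul h1 h2 hh1 hh2]
    rcases le_total (W g1 + W h2) (W g2 + W h1) with h | h
    · rw [min_eq_left h] at hmin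
      rw [min_eq_left (by linarith)]
      linarith
    · rw [min_eq_right h] at hmin
      rw [min_eq_right (by linarith)]
      linarith
  have hw1 : w (1 : FractionRing (AdicCompletion (IsLocalRing.maximalIdeal R) R ⧸ P)) = 0 := by
    have h := hwalg 1 one_ne_zero
    rw [map_one] at h
    rw [h, hW1]
  have hwinv : ∀ ξ : FractionRing (AdicCompletion (IsLocalRing.maximalIdeal R) R ⧸ P),
      ξ ≠ 0 → w ξ⁻¹ = - w ξ := by
    intro ξ hξ
    have h1 := hwmul ξ ξ⁻¹ hξ (inv_ne_zero hξ)
    rw [mul_inv_cancel₀ hξ, hw1] at h1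
    linarith
  -- #### assembling the statement
  refine ⟨w, hwmul, hwadd, ?_, ?_, ?_, ?_, ?_, ?_⟩
  · -- limit formula
    intro f c hc hcf ρ hEV
    have hne := hnotP f c ρ hc hcf hEV
    rw [hwalg _ hne]
    exact hW _ ρ ⟨f, c, rfl, hc, hcf, hEV⟩
  · -- extends ν
    intro x hx
    rw [hwalg _ (hWι x hx).1]
    exact (hWι x hx).2
  · -- nonnegative on R̂/P
    intro g hg
    obtain ⟨f, c, hf, hc, hcf, N, hN⟩ := hWspec g hg
    rw [hwalg g hg]
    obtain ⟨hcn, hv⟩ := hN N le_rfl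
    rw [← hv]
    exact hR _ hcn
  · -- positive on nonunits
    intro g hg hnu
    obtain ⟨f, c, hf, hc, hcf, N, hN⟩ := hWspec g hg
    rw [hwalg g hg]
    have hfnu : ¬ IsUnit f := by
      intro hu
      exact hnu (hf ▸ hu.map (Ideal.Quotient.mk P))
    have hval1 : f.val 1 = 0 := by
      by_contra h1
      exact hfnu (aux_unit f h1)
    obtain ⟨M, hM⟩ := hcf 1
    have hcm : c (max M N) ∈ IsLocalRing.maximalIdeal R := by
      have hev := hM (max M N) (le_max_left _ _)
      have h0 : (Submodule.Quotient.mk (c (max M N)) :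
          R ⧸ ((IsLocalRing.maximalIdeal R) ^ 1 • ⊤ : Submodule R R)) = 0 := by
        rw [← hev]
        exact hval1
      have hmem := (Submodule.Quotient.mk_eq_zero _).mp h0
      rw [hsmultop 1, pow_one] at hmem
      exact hmem
    obtain ⟨hcn, hv⟩ := hN (max M N) (le_max_right _ _)
    rw [← hv]
    exact hm _ hcm hcn
  · -- same value group
    ext r
    simp only [Set.mem_setOf_eq]
    constructor
    · rintro ⟨ξ, hξ, rfl⟩
      obtain ⟨g, h', hg, hh, he⟩ := hwex ξ hξ
      rw [hwval ξ g h' hg hh he]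
      obtain ⟨f, c, hf, hc, hcf, N1, hN1⟩ := hWspec g hg
      obtain ⟨f', c', hf', hc', hcf', N2, hN2⟩ := hWspec h' hh
      obtain ⟨ha, hva⟩ := hN1 N1 le_rfl
      obtain ⟨hb, hvb⟩ := hN2 N2 le_rfl
      refine ⟨algebraMap R (FractionRing R) (c N1) *
        (algebraMap R (FractionRing R) (c' N2))⁻¹,
        mul_ne_zero (hφne _ ha) (inv_ne_zero (hφne _ hb)), ?_⟩
      rw [hmul _ _ (hφne _ ha) (inv_ne_zero (hφne _ hb)), hva]
      have hi : ν ((algebraMap R (FractionRing R) (c' N2))⁻¹)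
          = - ν (algebraMap R (FractionRing R) (c' N2)) := by
        have h2 := hmul _ _ (hφne _ hb) (inv_ne_zero (hφne _ hb))
        rw [mul_inv_cancel₀ (hφne _ hb), hone] at h2
        linarith
      rw [hi, hvb]
      ring
    · rintro ⟨x, hx, rfl⟩
      obtain ⟨⟨a, b⟩, hab⟩ := IsLocalization.surj (nonZeroDivisors R) x
      have hb : (b : R) ≠ 0 := nonZeroDivisors.ne_zero b.2
      have ha : a ≠ 0 := by
        intro h0
        rw [h0, map_zero] at hab
        rcases mul_eq_zero.mp hab with h | h
        · exact hx h
        · exact hφne _ hb h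
      have hx' : ν x = ν (algebraMap R (FractionRing R) a)
          - ν (algebraMap R (FractionRing R) (b : R)) := by
        have h2 := hmul x (algebraMap R (FractionRing R) (b : R)) hx (hφne _ hb)
        rw [hab] at h2
        linarith
      set ξa := algebraMap _ (FractionRing (AdicCompletion (IsLocalRing.maximalIdeal R) R ⧸ P))
        (Ideal.Quotient.mk P (algebraMap R (AdicCompletion (IsLocalRing.maximalIdeal R) R) a))
        with hξa
      set ξb := algebraMap _ (FractionRing (AdicCompletion (IsLocalRing.maximalIdeal R) R ⧸ P))
        (Ideal.Quotient.mk P (algebraMap R (AdicCompletion (IsLocalRing.maximalIdeal R) R) (b : R)))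
        with hξb
      have hξane : ξa ≠ 0 := hα _ (hWι a ha).1
      have hξbne : ξb ≠ 0 := hα _ (hWι (b : R) hb).1
      refine ⟨ξa * ξb⁻¹, mul_ne_zero hξane (inv_ne_zero hξbne), ?_⟩
      rw [hwmul _ _ hξane (inv_ne_zero hξbne), hwinv _ hξbne, hξa, hξb,
        hwalg _ (hWι a ha).1, hwalg _ (hWι (b : R) hb).1,
        (hWι a ha).2, (hWι (b : R) hb).2, hx']
      ring
  · -- same residue field
    intro ξ hξ hwξ
    obtain ⟨g, h', hg, hh, heq⟩ := hwex ξ hξ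
    have hval0 : W g = W h' := by
      have h2 := hwval ξ g h' hg hh heq
      rw [hwξ] at h2
      linarith
    obtain ⟨f, c, hf, hc, hcf, N1, hN1⟩ := hWspec g hg
    obtain ⟨f', c', hf', hc', hcf', N2, hN2⟩ := hWspec h' hh
    obtain ⟨i, hi⟩ := exists_nat_gt (W g / δ)
    have hiδ : W g < (i : ℝ) * δ := by rwa [div_lt_iff₀ hδpos] at hi
    obtain ⟨M1, hM1⟩ := hc i
    obtain ⟨M2, hM2⟩ := hc' i
    set n := max (max N1 N2) (max M1 M2) with hndef
    have hn1 : N1 ≤ n := le_trans (le_max_left _ _) (le_max_left _ _)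
    have hn2 : N2 ≤ n := le_trans (le_max_right _ _) (le_max_left _ _)
    have hn3 : M1 ≤ n := le_trans (le_max_left _ _) (le_max_right _ _)
    have hn4 : M2 ≤ n := le_trans (le_max_right _ _) (le_max_right _ _)
    obtain ⟨han, hva⟩ := hN1 n hn1
    obtain ⟨hbn, hvb⟩ := hN2 n hn2
    refine ⟨c n, c' n, hbn, Or.inr (by rw [hva, hvb, hval0]), ?_⟩
    set Bb := algebraMap _ (FractionRing (AdicCompletion (IsLocalRing.maximalIdeal R) R ⧸ P))
      (Ideal.Quotient.mk P (algebraMap R (AdicCompletion (IsLocalRing.maximalIdeal R) R) (c' n)))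
      with hBb
    set Aa := algebraMap _ (FractionRing (AdicCompletion (IsLocalRing.maximalIdeal R) R ⧸ P))
      (Ideal.Quotient.mk P (algebraMap R (AdicCompletion (IsLocalRing.maximalIdeal R) R) (c n)))
      with hAa
    set s : AdicCompletion (IsLocalRing.maximalIdeal R) R ⧸ P :=
      Ideal.Quotient.mk P (f * algebraMap R (AdicCompletion (IsLocalRing.maximalIdeal R) R) (c' n)
        - algebraMap R (AdicCompletion (IsLocalRing.maximalIdeal R) R) (c n) * f') with hsdef
    have hsrel : (ξ * Bb - Aa) * algebraMap _ _ h' = algebraMap _ _ s := by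
      have hstep : (ξ * Bb - Aa) * algebraMap _ _ h'
          = (ξ * algebraMap _ _ h') * Bb - Aa * algebraMap _ _ h' := by ring
      rw [hstep, heq, hsdef, map_sub, map_mul, map_mul, hf, hf', map_sub, map_mul, map_mul,
        hBb, hAa]
    by_cases hs0 : s = 0
    · left
      have h0 := hsrel
      rw [hs0, map_zero] at h0
      rcases mul_eq_zero.mp h0 with h | h
      · exact sub_eq_zero.mp h
      · exact absurd h (hα h' hh)
    · right
      have hws := hwval _ s h' hs0 hh hsrel
      have hwb : w Bb = ν (algebraMap R (FractionRing R) (c' n)) := by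
        rw [hBb, hwalg _ (hWι _ hbn).1, (hWι _ hbn).2]
      have hcs : IsAdicCauchy (fun k => c k * c' n - c n * c' k) := by
        intro j
        obtain ⟨L1, hL1⟩ := hc j
        obtain ⟨L2, hL2⟩ := hc' j
        refine ⟨max L1 L2, fun k l hk hl => ?_⟩
        have hid : (c k * c' n - c n * c' k) - (c l * c' n - c n * c' l)
            = (c k - c l) * c' n - c n * (c' k - c' l) := by ring
        rw [hid]
        exact sub_mem
          (Ideal.mul_mem_right _ _ (hL1 k l (le_trans (le_max_left _ _) hk)
            (le_trans (le_max_left _ _) hl)))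
          (Ideal.mul_mem_left _ _ (hL2 k l (le_trans (le_max_right _ _) hk)
            (le_trans (le_max_right _ _) hl)))
      have hcv : ConvergesTo (fun k => c k * c' n - c n * c' k)
          (f * algebraMap R (AdicCompletion (IsLocalRing.maximalIdeal R) R) (c' n)
            - algebraMap R (AdicCompletion (IsLocalRing.maximalIdeal R) R) (c n) * f') := by
        intro j
        obtain ⟨L1, hL1⟩ := hcf j
        obtain ⟨L2, hL2⟩ := hcf' j
        refine ⟨max L1 L2, fun k hk => ?_⟩
        have hev : AdicCompletion.eval (IsLocalRing.maximalIdeal R) R j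
            (f * algebraMap R (AdicCompletion (IsLocalRing.maximalIdeal R) R) (c' n)
              - algebraMap R (AdicCompletion (IsLocalRing.maximalIdeal R) R) (c n) * f')
            = AdicCompletion.eval (IsLocalRing.maximalIdeal R) R j f
                * Submodule.Quotient.mk (c' n)
              - Submodule.Quotient.mk (c n)
                * AdicCompletion.eval (IsLocalRing.maximalIdeal R) R j f' := rfl
        rw [hev, hL1 k (le_trans (le_max_left _ _) hk), hL2 k (le_trans (le_max_right _ _) hk)]
        rfl
      have hbound : ∃ N, ∀ k, N ≤ k → (c k * c' n - c n * c' k = 0) ∨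
          ((i : ℝ) * δ + W g ≤ ν (algebraMap R (FractionRing R) (c k * c' n - c n * c' k))) := by
        refine ⟨n, fun k hk => ?_⟩
        have hid : c k * c' n - c n * c' k = (c k - c n) * c' n + (-(c n)) * (c' k - c' n) := by
          ring
        rw [hid]
        refine hbig _ _ _ ?_ ?_
        · rcases eq_or_ne (c k - c n) 0 with h0 | hne
          · left; rw [h0, zero_mul]
          · right
            have hv := (hpow i _ (hM1 k n (le_trans hn3 hk) hn3)).resolve_left hne
            rw [map_mul, hmul _ _ (hφne _ hne) (hφne _ hbn), hvb, ← hval0]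
            linarith
        · rcases eq_or_ne (c' k - c' n) 0 with h0 | hne
          · left; rw [h0, mul_zero]
          · right
            have hv := (hpow i _ (hM2 k n (le_trans hn4 hk) hn4)).resolve_left hne
            rw [map_mul, hmul _ _ (hφne _ (neg_ne_zero.mpr han)) (hφne _ hne), map_neg,
              aux_nu_neg ν hmul (hφne _ han), hva]
            linarith
      have hWs := hlow _ _ _ hcs hcv hbound (hsdef ▸ hs0)
      rw [← hsdef] at hWs
      rw [hws, hwb, hvb, ← hval0]
      linarith

end
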